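/- arXiv:2208.10079 — 4 statements merged into one kernel-verified Lean document; each statement's English description precedes it below -/
import Mathlib

section
/- Let R be a subring of ℂ, let g ≥ 1, let f be a formal power series over ℂ in variables u_1, …, u_g that is Hurwitz integral over R, and let M = (m_{ij}) be a g × g matrix all of whose entries lie in R. Then the formal power series f(Mu), obtained from f by substituting each variable u_i by the linear form Σ_{j=1}^g m_{ij} u_j, is Hurwitz integral over R. -/
open Finset

noncomputable section

/-- A formal power series `f` over `ℂ` in variables `u_1, …, u_g` is Hurwitz
integral over a subring `R ⊆ ℂ` if for every exponent tuple `d` the number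
`d_1! ⋯ d_g!` times the coefficient of `u^d` in `f` belongs to `R`. -/
def HurwitzIntegral (g : ℕ) (R : Subring ℂ) (f : MvPowerSeries (Fin g) ℂ) : Prop :=
  ∀ d : Fin g →₀ ℕ, (∏ i, ((d i).factorial : ℂ)) * MvPowerSeries.coeff d f ∈ R

/-- Factorial identity for a matrix with prescribed row and column sums. -/
lemma multinomial_matrix_identity (g : ℕ) (k : Fin g → Fin g → ℕ) (d e : Fin g → ℕ)
    (hrow : ∀ i, ∑ j, k i j = e i) (hcol : ∀ j, ∑ i, k i j = d j) :
    (∏ j, (d j).factorial) * ∏ i, Nat.multinomial univ (k i) =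
      (∏ i, (e i).factorial) * ∏ j, Nat.multinomial univ (fun i => k i j) := by
  have hN : 0 < ∏ i, ∏ j, (k i j).factorial :=
    Finset.prod_pos fun _ _ => Finset.prod_pos fun _ _ => Nat.factorial_pos _
  apply Nat.eq_of_mul_eq_mul_right hN
  have h1 : (∏ i, Nat.multinomial univ (k i)) * (∏ i, ∏ j, (k i j).factorial)
      = ∏ i, (e i).factorial := by
    rw [← Finset.prod_mul_distrib]
    exact Finset.prod_congr rfl fun i _ => by
      rw [mul_comm, Nat.multinomial_spec, hrow i]
  have h2 : (∏ j, Nat.multinomial univ (fun i => k i j)) * (∏ j, ∏ i, (k i j).factorial)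
      = ∏ j, (d j).factorial := by
    rw [← Finset.prod_mul_distrib]
    exact Finset.prod_congr rfl fun j _ => by
      rw [mul_comm, Nat.multinomial_spec, hcol j]
  have hswap : (∏ i, ∏ j, (k i j).factorial) = ∏ j, ∏ i, (k i j).factorial :=
    Finset.prod_comm
  calc (∏ j, (d j).factorial) * (∏ i, Nat.multinomial univ (k i))
        * (∏ i, ∏ j, (k i j).factorial)
      = (∏ j, (d j).factorial) * (∏ i, (e i).factorial) := by rw [mul_assoc, h1]
    _ = (∏ i, (e i).factorial) * (∏ j, Nat.multinomial univ (fun i => k i j))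
        * (∏ i, ∏ j, (k i j).factorial) := by
        rw [hswap, mul_assoc, h2, mul_comm]

/-- Coefficient extraction for a product of powers of linear forms. -/
lemma coeff_prod_linear_pow (g : ℕ) (M : Matrix (Fin g) (Fin g) ℂ)
    (e : Fin g → ℕ) (d : Fin g →₀ ℕ) :
    MvPolynomial.coeff d
        (∏ i, (∑ j, MvPolynomial.C (M i j) * MvPolynomial.X j :
          MvPolynomial (Fin g) ℂ) ^ e i) =
      ∑ k ∈ Fintype.piFinset (fun i => Finset.piAntidiag univ (e i)),
        if (Finsupp.equivFunOnFinite.symm fun j => ∑ i, k i j) = d then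
          (∏ i, (Nat.multinomial univ (k i) : ℂ)) * ∏ i, ∏ j, M i j ^ k i j
        else 0 := by
  have expand : (∏ i, (∑ j, MvPolynomial.C (M i j) * MvPolynomial.X j :
      MvPolynomial (Fin g) ℂ) ^ e i) =
      ∑ k ∈ Fintype.piFinset (fun i => Finset.piAntidiag univ (e i)),
        MvPolynomial.monomial (Finsupp.equivFunOnFinite.symm fun j => ∑ i, k i j)
          ((∏ i, (Nat.multinomial univ (k i) : ℂ)) * ∏ i, ∏ j, M i j ^ k i j) := by
    calc (∏ i, (∑ j, MvPolynomial.C (M i j) * MvPolynomial.X j :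
        MvPolynomial (Fin g) ℂ) ^ e i)
        = ∏ i, ∑ k ∈ Finset.piAntidiag univ (e i),
            (Nat.multinomial univ k : MvPolynomial (Fin g) ℂ) *
              ∏ j, (MvPolynomial.C (M i j) * MvPolynomial.X j) ^ k j := by
          exact Finset.prod_congr rfl fun i _ =>
            Finset.sum_pow_eq_sum_piAntidiag univ _ (e i)
      _ = ∑ k ∈ Fintype.piFinset (fun i => Finset.piAntidiag univ (e i)),
            ∏ i, ((Nat.multinomial univ (k i) : MvPolynomial (Fin g) ℂ) *
              ∏ j, (MvPolynomial.C (M i j) * MvPolynomial.X j) ^ k i j) :=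
          Finset.prod_univ_sum _ _
      _ = _ := by
          refine Finset.sum_congr rfl fun k _ => ?_
          have : ∀ i, ((Nat.multinomial univ (k i) : MvPolynomial (Fin g) ℂ) *
              ∏ j, (MvPolynomial.C (M i j) * MvPolynomial.X j) ^ k i j) =
              MvPolynomial.C ((Nat.multinomial univ (k i) : ℂ) * ∏ j, M i j ^ k i j) *
                ∏ j, MvPolynomial.X j ^ k i j := by
            intro i
            simp only [mul_pow, Finset.prod_mul_distrib, ← map_pow, ← map_prod, map_mul,
              map_natCast]
            ring
          rw [Finset.prod_congr rfl fun i _ => this i, Finset.prod_mul_distrib, ← map_prod]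
          rw [MvPolynomial.monomial_eq]
          congr 1
          · congr 1
            rw [Finset.prod_mul_distrib]
          · rw [Finsupp.prod_pow]
            rw [Finset.prod_comm]
            refine Finset.prod_congr rfl fun j _ => ?_
            simp only [Finsupp.coe_equivFunOnFinite_symm]
            exact Finset.prod_pow_eq_pow_sum univ _ _
  rw [expand, MvPolynomial.coeff_sum]
  exact Finset.sum_congr rfl fun k _ => MvPolynomial.coeff_monomial d _ _

/-- Let `R` be a subring of `ℂ`, `g ≥ 1`, `f` a formal power series in `u_1, …, u_g`
over `ℂ` that is Hurwitz integral over `R`, and `M` a `g × g` matrix with entries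
in `R`.  Let `F = f(Mu)` be the power series obtained from `f` by substituting
each variable `u_i` by the linear form `Σ_j M i j * u_j`; this substitution is
characterized coefficientwise by `hF`: the coefficient of `u^d` in `F` is
`Σ_e (coeff of u^e in f) · (coeff of u^d in ∏_i (Σ_j M i j u_j)^{e_i})`, where `e`
ranges over the exponent tuples of total degree `Σ d` (only those contribute,
since the substituted linear forms are homogeneous of degree `1`).
Then `F` is Hurwitz integral over `R`. -/
theorem hurwitz_integral_subst_linear (g : ℕ) (hg : 1 ≤ g) (R : Subring ℂ)
    (M : Matrix (Fin g) (Fin g) ℂ) (hM : ∀ i j, M i j ∈ R)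
    (f : MvPowerSeries (Fin g) ℂ) (hf : HurwitzIntegral g R f)
    (F : MvPowerSeries (Fin g) ℂ)
    (hF : ∀ d : Fin g →₀ ℕ, MvPowerSeries.coeff d F =
      ∑ e ∈ Finset.Nat.antidiagonalTuple g (∑ i, d i),
        MvPowerSeries.coeff (Finsupp.equivFunOnFinite.symm e) f *
          MvPolynomial.coeff d
            (∏ i, (∑ j, MvPolynomial.C (M i j) * MvPolynomial.X j :
              MvPolynomial (Fin g) ℂ) ^ e i)) :
    HurwitzIntegral g R F := by
  intro d
  rw [hF d, Finset.mul_sum]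
  refine Subring.sum_mem R fun e he => ?_
  -- key: (∏ d!) * coeff_d (∏ linear^e) = (∏ e!) * r with r ∈ R
  obtain ⟨r, hr, hkey⟩ : ∃ r ∈ R,
      (∏ j, ((d j).factorial : ℂ)) * MvPolynomial.coeff d
        (∏ i, (∑ j, MvPolynomial.C (M i j) * MvPolynomial.X j :
          MvPolynomial (Fin g) ℂ) ^ e i) = (∏ i, ((e i).factorial : ℂ)) * r := by
    refine ⟨∑ k ∈ Fintype.piFinset (fun i => Finset.piAntidiag univ (e i)),
      if (Finsupp.equivFunOnFinite.symm fun j => ∑ i, k i j) = d then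
        (∏ j, (Nat.multinomial univ (fun i => k i j) : ℂ)) * ∏ i, ∏ j, M i j ^ k i j
      else 0, ?_, ?_⟩
    · refine Subring.sum_mem R fun k _ => ?_
      split
      · exact Subring.mul_mem R (Subring.prod_mem R fun j _ => natCast_mem R _)
          (Subring.prod_mem R fun i _ => Subring.prod_mem R fun j _ =>
            Subring.pow_mem R (hM i j) _)
      · exact Subring.zero_mem R
    · rw [coeff_prod_linear_pow, Finset.mul_sum, Finset.mul_sum]
      refine Finset.sum_congr rfl fun k hk => ?_
      rw [Fintype.mem_piFinset] at hk
      have hrow : ∀ i, ∑ j, k i j = e i := fun i =>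
        ((Finset.mem_piAntidiag).1 (hk i)).1
      by_cases hcond : (Finsupp.equivFunOnFinite.symm fun j => ∑ i, k i j) = d
      · rw [if_pos hcond, if_pos hcond]
        have hcol : ∀ j, ∑ i, k i j = d j := by
          intro j
          have := congrArg (fun s => s j) hcond
          simpa using this
        have hnat := multinomial_matrix_identity g k (fun j => d j) e hrow hcol
        have hcast : ((∏ j, (d j).factorial) * ∏ i, Nat.multinomial univ (k i) : ℂ) =
            ((∏ i, (e i).factorial) * ∏ j, Nat.multinomial univ (fun i => k i j) : ℂ) := by
          exact_mod_cast congrArg (Nat.cast : ℕ → ℂ) hnat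
        push_cast at hcast
        calc (∏ j, ((d j).factorial : ℂ)) *
              ((∏ i, (Nat.multinomial univ (k i) : ℂ)) * ∏ i, ∏ j, M i j ^ k i j)
            = ((∏ j, ((d j).factorial : ℂ)) * ∏ i, (Nat.multinomial univ (k i) : ℂ)) *
              ∏ i, ∏ j, M i j ^ k i j := by ring
          _ = ((∏ i, ((e i).factorial : ℂ)) *
              ∏ j, (Nat.multinomial univ (fun i => k i j) : ℂ)) *
              ∏ i, ∏ j, M i j ^ k i j := by rw [hcast]
          _ = _ := by ring
      · rw [if_neg hcond, if_neg hcond, mul_zero, mul_zero]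
  have heq : (∏ i, ((d i).factorial : ℂ)) *
        (MvPowerSeries.coeff (Finsupp.equivFunOnFinite.symm e) f *
          MvPolynomial.coeff d (∏ i, (∑ j, MvPolynomial.C (M i j) * MvPolynomial.X j :
            MvPolynomial (Fin g) ℂ) ^ e i))
      = ((∏ i, ((e i).factorial : ℂ)) *
        MvPowerSeries.coeff (Finsupp.equivFunOnFinite.symm e) f) * r := by
    calc (∏ i, ((d i).factorial : ℂ)) *
        (MvPowerSeries.coeff (Finsupp.equivFunOnFinite.symm e) f *
          MvPolynomial.coeff d (∏ i, (∑ j, MvPolynomial.C (M i j) * MvPolynomial.X j :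
            MvPolynomial (Fin g) ℂ) ^ e i))
      = MvPowerSeries.coeff (Finsupp.equivFunOnFinite.symm e) f *
        ((∏ i, ((d i).factorial : ℂ)) * MvPolynomial.coeff d
          (∏ i, (∑ j, MvPolynomial.C (M i j) * MvPolynomial.X j :
            MvPolynomial (Fin g) ℂ) ^ e i)) := by ring
    _ = ((∏ i, ((e i).factorial : ℂ)) *
        MvPowerSeries.coeff (Finsupp.equivFunOnFinite.symm e) f) * r := by
        rw [hkey]; ring
  rw [heq]
  refine Subring.mul_mem R ?_ hr
  have := hf (Finsupp.equivFunOnFinite.symm e)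
  simpa using this

end
end

section
/- Let R be a subring of ℂ and let f = 1 + Σ_{j≥1} b_j t^j ∈ ℂ[[t]] be a formal power series with constant term 1 such that b_j ∈ R for every j ≥ 1 and b_j ∈ 2R = {2r : r ∈ R} for every odd j. Then every coefficient of the formal power series f′/(2f) — that is, of the unique h ∈ ℂ[[t]] satisfying 2·f·h = f′, where f′ is the formal derivative of f — lies in R. -/
open Finset

noncomputable section

/-- Let `R` be a subring of `ℂ` and let `f = 1 + Σ_{j≥1} b_j t^j ∈ ℂ[[t]]` be a
formal power series with constant term `1`, all of whose coefficients lie in `R`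
and whose odd-index coefficients lie in `2R = {2r : r ∈ R}`.  Let `h ∈ ℂ[[t]]` be
the unique power series with `2·f·h = f′`, where `f′` is the formal derivative of
`f` (characterized coefficientwise: the `n`-th coefficient of `f′` is
`(n+1)·(coefficient of `t^{n+1}` in `f`)`); that is, `h = f′/(2f)`.
Then every coefficient of `h` lies in `R`. -/
theorem coeff_log_deriv_half_mem (R : Subring ℂ) (f : PowerSeries ℂ)
    (hf0 : PowerSeries.coeff 0 f = 1)
    (hfR : ∀ j : ℕ, PowerSeries.coeff j f ∈ R)
    (hfodd : ∀ j : ℕ, Odd j → ∃ r ∈ R, PowerSeries.coeff j f = 2 * r)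
    (h : PowerSeries ℂ)
    (hh : 2 * (f * h) = PowerSeries.mk fun n : ℕ =>
      ((n : ℂ) + 1) * PowerSeries.coeff (n + 1) f) :
    ∀ n : ℕ, PowerSeries.coeff n h ∈ R := by
  intro n
  induction n using Nat.strong_induction_on with
  | _ n ih =>
    have key := congrArg (PowerSeries.coeff n) hh
    have h2 : (2 : PowerSeries ℂ) = PowerSeries.C 2 := by
      exact (map_ofNat (PowerSeries.C) 2).symm
    rw [h2, PowerSeries.coeff_C_mul, PowerSeries.coeff_mk, PowerSeries.coeff_mul,
      Finset.Nat.sum_antidiagonal_eq_sum_range_succ_mk, Finset.sum_range_succ'] at key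
    simp only [hf0, one_mul, Nat.sub_zero] at key
    have hn : PowerSeries.coeff n h =
        ((n : ℂ) + 1) * PowerSeries.coeff (n + 1) f / 2 -
          ∑ i ∈ range n, PowerSeries.coeff (i + 1) f * PowerSeries.coeff (n - (i + 1)) h := by
      linear_combination key / 2
    rw [hn]
    apply sub_mem
    · rcases Nat.even_or_odd n with he | ho
      · obtain ⟨r, hr, hfr⟩ := hfodd (n + 1) he.add_one
        rw [hfr, show ((n : ℂ) + 1) * (2 * r) / 2 = ((n : ℂ) + 1) * r by ring]
        exact mul_mem (by exact_mod_cast natCast_mem R (n + 1)) hr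
      · obtain ⟨k, hk⟩ := ho
        subst hk
        rw [show (((2 * k + 1 : ℕ) : ℂ) + 1) * PowerSeries.coeff (2 * k + 1 + 1) f / 2
            = ((k + 1 : ℕ) : ℂ) * PowerSeries.coeff (2 * k + 1 + 1) f by push_cast; ring]
        exact mul_mem (natCast_mem R (k + 1)) (hfR _)
    · exact sum_mem fun i hi => mul_mem (hfR _) (ih _ (by have := mem_range.mp hi; omega))

end
end

section
/- Let c̃ and c be finitely supported functions from B(A_m) × B(A_m) to ℂ such that c(I, J) = 0 whenever Σ_k a_k I_k ≥ Σ_k a_k J_k, and suppose the polynomial F(x, y) = Σ_{I,J ∈ B(A_m)} c̃(I,J) x^I y^J + (x_1 − y_1)² Σ_{I,J ∈ B(A_m)} c(I,J) x^I y^J in the 2m variables x = (x_1, …, x_m), y = (y_1, …, y_m) is symmetric, i.e. F(y, x) = F(x, y). Then for all I = (i_1, i_2, …, i_m), J = (j_1, j_2, …, j_m) ∈ B(A_m) with Σ_k a_k i_k < Σ_k a_k j_k: (i) if i_1 = 0 then c(I,J) = c̃((j_1+2, j_2, …, j_m), I) − c̃(I, (j_1+2, j_2, …, j_m)); (ii)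 if i_1 = 1 then c(I,J) = 2c̃((j_1+3, j_2, …, j_m), (0, i_2, …, i_m)) − 2c̃((0, i_2, …, i_m), (j_1+3, j_2, …, j_m)) + c̃((j_1+2, j_2, …, j_m), (1, i_2, …, i_m)) − c̃((1, i_2, …, i_m), (j_1+2, j_2, …, j_m)); (iii) if i_1 ≥ 2 then c(I,J) = 2c((i_1−1, i_2, …, i_m), (j_1+1, j_2, …, j_m)) − c((i_1−2, i_2, …, i_m), (j_1+2, j_2, …, j_m)) + c̃((j_1+2, j_2, …, j_m), I) − c̃(I, (j_1+2, j_2, …, j_m)). -/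
open Finset

noncomputable section

/-- `dseq a i` is `gcd(a 1, …, a i)`. -/
def dseq (a : ℕ → ℕ) (i : ℕ) : ℕ := Finset.gcd (Finset.Icc 1 i) a

/-- `BAm m a ℓ` says that the tuple `(ℓ 1, …, ℓ m)` belongs to `B(A_m)`. -/
def BAm (m : ℕ) (a : ℕ → ℕ) (ℓ : ℕ → ℕ) : Prop :=
  (∀ j, (j < 1 ∨ m < j) → ℓ j = 0) ∧
    ∀ i, 2 ≤ i → i ≤ m → ℓ i < dseq a (i - 1) / dseq a i

/-- `Telescopic m a` says that `(a 1, …, a m)` is a telescopic sequence. -/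
def Telescopic (m : ℕ) (a : ℕ → ℕ) : Prop :=
  2 ≤ m ∧ (∀ i, 1 ≤ i → i ≤ m → 2 ≤ a i) ∧ dseq a m = 1 ∧
    ∀ i, 2 ≤ i → i ≤ m → ∃ ℓ : ℕ → ℕ, (∀ j, (j < 1 ∨ i ≤ j) → ℓ j = 0) ∧
      a i * dseq a (i - 1) = dseq a i * ∑ j ∈ Finset.Icc 1 m, ℓ j * a j

/-- The monomial `x^I y^J` in the `2m` variables `x_k = X (false, k)`,
`y_k = X (true, k)`, `1 ≤ k ≤ m`. -/
def monoXY (m : ℕ) (I J : ℕ → ℕ) : MvPolynomial (Bool × ℕ) ℂ :=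
  (∏ k ∈ Finset.Icc 1 m, MvPolynomial.X (false, k) ^ I k) *
    ∏ k ∈ Finset.Icc 1 m, MvPolynomial.X (true, k) ^ J k

/-! ### Auxiliary definitions and lemmas -/

/-- The exponent finsupp of the monomial `x^A y^B`. -/
def mu (m : ℕ) (A B : ℕ → ℕ) : (Bool × ℕ) →₀ ℕ :=
  ∑ k ∈ Finset.Icc 1 m, (Finsupp.single (false, k) (A k) + Finsupp.single (true, k) (B k))

lemma mu_apply (m : ℕ) (A B : ℕ → ℕ) (b : Bool) (j : ℕ) :
    mu m A B (b, j) = if j ∈ Finset.Icc 1 m then (if b then B j else A j) else 0 := by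
  rw [mu, Finset.sum_apply']
  simp only [Finsupp.add_apply, Finsupp.single_apply, Prod.mk.injEq]
  cases b <;> simp [Finset.sum_ite_eq]

/-- Supported in `{1, …, m}`. -/
def Supp (m : ℕ) (A : ℕ → ℕ) : Prop := ∀ j, (j < 1 ∨ m < j) → A j = 0

lemma supp_update (m : ℕ) (hm : 1 ≤ m) {A : ℕ → ℕ} (hA : Supp m A) (v : ℕ) :
    Supp m (Function.update A 1 v) := by
  intro j hj
  rcases eq_or_ne j 1 with rfl | hne
  · exact absurd hj (by omega)
  · rw [Function.update_of_ne hne]; exact hA j hj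

lemma mu_inj (m : ℕ) {A B A' B' : ℕ → ℕ} (hA : Supp m A) (hB : Supp m B)
    (hA' : Supp m A') (hB' : Supp m B') (h : mu m A B = mu m A' B') :
    A = A' ∧ B = B' := by
  have key : ∀ (b : Bool) (j : ℕ), (if j ∈ Finset.Icc 1 m then (if b then B j else A j) else 0)
      = (if j ∈ Finset.Icc 1 m then (if b then B' j else A' j) else 0) := by
    intro b j
    rw [← mu_apply, ← mu_apply, h]
  constructor <;> funext j <;> by_cases hj : j ∈ Finset.Icc 1 m
  · have := key false j; simp only [if_pos hj] at this; simpa using this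
  · simp only [Finset.mem_Icc, not_and_or, not_le] at hj
    rw [hA j hj, hA' j hj]
  · have := key true j; simp only [if_pos hj] at this; simpa using this
  · simp only [Finset.mem_Icc, not_and_or, not_le] at hj
    rw [hB j hj, hB' j hj]

lemma single_le_mu (m : ℕ) (hm : 1 ≤ m) (A B : ℕ → ℕ) (b : Bool) (w : ℕ) :
    Finsupp.single (b, 1) w ≤ mu m A B ↔ w ≤ (if b then B 1 else A 1) := by
  rw [Finsupp.single_le_iff, mu_apply]
  simp [hm]

lemma pair_le_mu (m : ℕ) (hm : 1 ≤ m) (A B : ℕ → ℕ) :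
    Finsupp.single ((false : Bool), 1) 1 + Finsupp.single ((true : Bool), 1) 1 ≤ mu m A B
      ↔ 1 ≤ A 1 ∧ 1 ≤ B 1 := by
  constructor
  · intro h
    constructor
    · have := h (false, 1)
      simpa [mu_apply, hm, Finsupp.single_apply] using this
    · have := h (true, 1)
      simpa [mu_apply, hm, Finsupp.single_apply] using this
  · rintro ⟨h1, h2⟩ ⟨b, j⟩
    rw [Finsupp.add_apply, Finsupp.single_apply, Finsupp.single_apply, mu_apply]
    have h1m : 1 ∈ Finset.Icc 1 m := by simp [hm]
    by_cases hj : j = 1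
    · subst hj; cases b <;> simp_all
    · cases b <;> simp only [Prod.mk.injEq] <;> split_ifs <;> simp_all <;> omega

lemma mu_sub_false (m : ℕ) (A B : ℕ → ℕ) (w : ℕ) :
    mu m A B - Finsupp.single ((false : Bool), 1) w
      = mu m (Function.update A 1 (A 1 - w)) B := by
  ext ⟨b, j⟩
  rw [Finsupp.tsub_apply, mu_apply, mu_apply, Finsupp.single_apply]
  by_cases hj : j = 1
  · subst hj; cases b <;> simp only [Function.update_self, Prod.mk.injEq] <;>
      split_ifs <;> simp_all
  · cases b <;> simp only [Prod.mk.injEq, Function.update_of_ne hj] <;>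
      split_ifs <;> simp_all

lemma mu_sub_true (m : ℕ) (A B : ℕ → ℕ) (w : ℕ) :
    mu m A B - Finsupp.single ((true : Bool), 1) w
      = mu m A (Function.update B 1 (B 1 - w)) := by
  ext ⟨b, j⟩
  rw [Finsupp.tsub_apply, mu_apply, mu_apply, Finsupp.single_apply]
  by_cases hj : j = 1
  · subst hj; cases b <;> simp only [Function.update_self, Prod.mk.injEq] <;>
      split_ifs <;> simp_all
  · cases b <;> simp only [Prod.mk.injEq, Function.update_of_ne hj] <;>
      split_ifs <;> simp_all

lemma mu_sub_pair (m : ℕ) (A B : ℕ → ℕ) :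
    mu m A B - (Finsupp.single ((false : Bool), 1) 1 + Finsupp.single ((true : Bool), 1) 1)
      = mu m (Function.update A 1 (A 1 - 1)) (Function.update B 1 (B 1 - 1)) := by
  ext ⟨b, j⟩
  rw [Finsupp.tsub_apply, mu_apply, mu_apply, Finsupp.add_apply,
    Finsupp.single_apply, Finsupp.single_apply]
  by_cases hj : j = 1
  · subst hj; cases b <;> simp only [Function.update_self, Prod.mk.injEq] <;>
      split_ifs <;> simp_all
  · cases b <;> simp only [Prod.mk.injEq, Function.update_of_ne hj] <;>
      split_ifs <;> simp_all

lemma prod_monomial (s : Finset ℕ) (f : ℕ → ((Bool × ℕ) →₀ ℕ)) :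
    ∏ k ∈ s, (MvPolynomial.monomial (f k) (1 : ℂ)) = MvPolynomial.monomial (∑ k ∈ s, f k) 1 := by
  classical
  induction s using Finset.induction with
  | empty => simp [MvPolynomial.monomial_zero']
  | insert _ _ h ih =>
    rw [Finset.prod_insert h, Finset.sum_insert h, ih, MvPolynomial.monomial_mul, one_mul]

lemma monoXY_eq (m : ℕ) (I J : ℕ → ℕ) :
    monoXY m I J = MvPolynomial.monomial (mu m I J) 1 := by
  rw [monoXY]
  simp_rw [MvPolynomial.X_pow_eq_monomial]
  rw [prod_monomial, prod_monomial, MvPolynomial.monomial_mul, one_mul, mu,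
    Finset.sum_add_distrib]

lemma coeff_sum_part (m : ℕ) (cf : (ℕ → ℕ) → (ℕ → ℕ) → ℂ)
    (S : Finset ((ℕ → ℕ) × (ℕ → ℕ)))
    (hsupp : ∀ I J, cf I J ≠ 0 → (I, J) ∈ S)
    (hS : ∀ p ∈ S, Supp m p.1 ∧ Supp m p.2)
    (A B : ℕ → ℕ) (hA : Supp m A) (hB : Supp m B) :
    MvPolynomial.coeff (mu m A B) (∑ p ∈ S, cf p.1 p.2 • monoXY m p.1 p.2) = cf A B := by
  rw [MvPolynomial.coeff_sum]
  have hterm : ∀ p : (ℕ → ℕ) × (ℕ → ℕ),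
      MvPolynomial.coeff (mu m A B) (cf p.1 p.2 • monoXY m p.1 p.2)
        = if mu m p.1 p.2 = mu m A B then cf p.1 p.2 else 0 := by
    intro p
    rw [monoXY_eq, MvPolynomial.coeff_smul, MvPolynomial.coeff_monomial]
    split_ifs <;> simp
  simp_rw [hterm]
  rw [Finset.sum_eq_single (A, B)]
  · simp
  · intro p hp hne
    rw [if_neg]
    intro h
    obtain ⟨h1, h2⟩ := mu_inj m (hS p hp).1 (hS p hp).2 hA hB h
    exact hne (by rw [← h1, ← h2])
  · intro hmem
    rw [if_pos rfl]
    by_contra hne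
    exact hmem (hsupp A B hne)

lemma flip_inj : Function.Injective (fun p : Bool × ℕ => (!p.1, p.2)) := by
  intro p q h
  simp only [Prod.mk.injEq] at h
  obtain ⟨h1, h2⟩ := h
  exact Prod.ext (by cases hp : p.1 <;> cases hq : q.1 <;> simp_all) h2

lemma mapDomain_flip (m : ℕ) (A B : ℕ → ℕ) :
    Finsupp.mapDomain (fun p : Bool × ℕ => (!p.1, p.2)) (mu m A B) = mu m B A := by
  ext x
  obtain ⟨b, j⟩ := x
  have : ((b, j) : Bool × ℕ) = (fun p : Bool × ℕ => (!p.1, p.2)) (!b, j) := by simp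
  rw [this, Finsupp.mapDomain_apply flip_inj, mu_apply, mu_apply]
  cases b <;> simp

lemma coeff_symm (m : ℕ) (F : MvPolynomial (Bool × ℕ) ℂ)
    (hsym : MvPolynomial.rename (fun p : Bool × ℕ => (!p.1, p.2)) F = F)
    (A B : ℕ → ℕ) :
    MvPolynomial.coeff (mu m A B) F = MvPolynomial.coeff (mu m B A) F := by
  have h := MvPolynomial.coeff_rename_mapDomain _ flip_inj F (mu m A B)
  rw [mapDomain_flip, hsym] at h
  exact h.symm

lemma coeff_F (m : ℕ) (hm : 1 ≤ m) (ct c : (ℕ → ℕ) → (ℕ → ℕ) → ℂ)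
    (Sct Sc : Finset ((ℕ → ℕ) × (ℕ → ℕ)))
    (hctsupp : ∀ I J, ct I J ≠ 0 → (I, J) ∈ Sct)
    (hSct : ∀ p ∈ Sct, Supp m p.1 ∧ Supp m p.2)
    (hcsupp : ∀ I J, c I J ≠ 0 → (I, J) ∈ Sc)
    (hSc : ∀ p ∈ Sc, Supp m p.1 ∧ Supp m p.2)
    (A B : ℕ → ℕ) (hA : Supp m A) (hB : Supp m B) :
    MvPolynomial.coeff (mu m A B)
      ((∑ p ∈ Sct, ct p.1 p.2 • monoXY m p.1 p.2) +
        (MvPolynomial.X (false, 1) - MvPolynomial.X (true, 1)) ^ 2 *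
          ∑ p ∈ Sc, c p.1 p.2 • monoXY m p.1 p.2)
    = ct A B
      + (if 2 ≤ A 1 then c (Function.update A 1 (A 1 - 2)) B else 0)
      + (if 2 ≤ B 1 then c A (Function.update B 1 (B 1 - 2)) else 0)
      - 2 * (if 1 ≤ A 1 ∧ 1 ≤ B 1 then
          c (Function.update A 1 (A 1 - 1)) (Function.update B 1 (B 1 - 1)) else 0) := by
  set Q := ∑ p ∈ Sc, c p.1 p.2 • monoXY m p.1 p.2 with hQ
  have hexp : (MvPolynomial.X (false, 1) - MvPolynomial.X (true, 1) :
        MvPolynomial (Bool × ℕ) ℂ) ^ 2 * Q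
      = (MvPolynomial.monomial (Finsupp.single ((false : Bool), 1) 2) 1 * Q
          + MvPolynomial.monomial (Finsupp.single ((true : Bool), 1) 2) 1 * Q)
        - (MvPolynomial.monomial
            (Finsupp.single ((false : Bool), 1) 1 + Finsupp.single ((true : Bool), 1) 1) 1 * Q
          + MvPolynomial.monomial
            (Finsupp.single ((false : Bool), 1) 1 + Finsupp.single ((true : Bool), 1) 1) 1 * Q) := by
    have e1 : (MvPolynomial.monomial (Finsupp.single ((false : Bool), 1) 2) (1 : ℂ))
        = MvPolynomial.X (false, 1) ^ 2 := (MvPolynomial.X_pow_eq_monomial).symm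
    have e2 : (MvPolynomial.monomial (Finsupp.single ((true : Bool), 1) 2) (1 : ℂ))
        = MvPolynomial.X (true, 1) ^ 2 := (MvPolynomial.X_pow_eq_monomial).symm
    have e3 : (MvPolynomial.monomial
          (Finsupp.single ((false : Bool), 1) 1 + Finsupp.single ((true : Bool), 1) 1) (1 : ℂ))
        = MvPolynomial.X (false, 1) * MvPolynomial.X (true, 1) := by
      rw [MvPolynomial.monomial_single_add, ← MvPolynomial.X_pow_eq_monomial, pow_one, pow_one]
    rw [e1, e2, e3]; ring
  have hT1 : MvPolynomial.coeff (mu m A B)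
      (MvPolynomial.monomial (Finsupp.single ((false : Bool), 1) 2) 1 * Q)
      = if 2 ≤ A 1 then c (Function.update A 1 (A 1 - 2)) B else 0 := by
    rw [MvPolynomial.coeff_monomial_mul']
    by_cases h : 2 ≤ A 1
    · rw [if_pos ((single_le_mu m hm A B false 2).2 (by simpa using h)), if_pos h, one_mul,
        mu_sub_false, coeff_sum_part m c Sc hcsupp hSc _ _ (supp_update m hm hA _) hB]
    · rw [if_neg (fun hc => h (by simpa using (single_le_mu m hm A B false 2).1 hc)), if_neg h]
  have hT2 : MvPolynomial.coeff (mu m A B)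
      (MvPolynomial.monomial (Finsupp.single ((true : Bool), 1) 2) 1 * Q)
      = if 2 ≤ B 1 then c A (Function.update B 1 (B 1 - 2)) else 0 := by
    rw [MvPolynomial.coeff_monomial_mul']
    by_cases h : 2 ≤ B 1
    · rw [if_pos ((single_le_mu m hm A B true 2).2 (by simpa using h)), if_pos h, one_mul,
        mu_sub_true, coeff_sum_part m c Sc hcsupp hSc _ _ hA (supp_update m hm hB _)]
    · rw [if_neg (fun hc => h (by simpa using (single_le_mu m hm A B true 2).1 hc)), if_neg h]
  have hT3 : MvPolynomial.coeff (mu m A B)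
      (MvPolynomial.monomial
        (Finsupp.single ((false : Bool), 1) 1 + Finsupp.single ((true : Bool), 1) 1) 1 * Q)
      = if 1 ≤ A 1 ∧ 1 ≤ B 1 then
          c (Function.update A 1 (A 1 - 1)) (Function.update B 1 (B 1 - 1)) else 0 := by
    rw [MvPolynomial.coeff_monomial_mul']
    by_cases h : 1 ≤ A 1 ∧ 1 ≤ B 1
    · rw [if_pos ((pair_le_mu m hm A B).2 h), if_pos h, one_mul, mu_sub_pair,
        coeff_sum_part m c Sc hcsupp hSc _ _ (supp_update m hm hA _) (supp_update m hm hB _)]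
    · rw [if_neg (fun hc => h ((pair_le_mu m hm A B).1 hc)), if_neg h]
  rw [MvPolynomial.coeff_add, hexp, MvPolynomial.coeff_sub, MvPolynomial.coeff_add,
    MvPolynomial.coeff_add, hT1, hT2, hT3,
    coeff_sum_part m ct Sct hctsupp hSct A B hA hB]
  ring

lemma sum_update (m : ℕ) (a : ℕ → ℕ) (hm : 1 ≤ m) (X : ℕ → ℕ) (v : ℕ) :
    ∑ k ∈ Finset.Icc 1 m, a k * (Function.update X 1 v) k + a 1 * X 1
      = ∑ k ∈ Finset.Icc 1 m, a k * X k + a 1 * v := by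
  have h1 : (1 : ℕ) ∈ Finset.Icc 1 m := by simp [hm]
  rw [← Finset.sum_erase_add _ _ h1, ← Finset.sum_erase_add _ (fun k => a k * X k) h1]
  have he : ∑ k ∈ (Finset.Icc 1 m).erase 1, a k * (Function.update X 1 v) k
      = ∑ k ∈ (Finset.Icc 1 m).erase 1, a k * X k :=
    Finset.sum_congr rfl fun k hk => by
      rw [Function.update_of_ne (Finset.ne_of_mem_erase hk)]
  rw [he, Function.update_self]
  ring

lemma sum_update_le (m : ℕ) (a : ℕ → ℕ) (hm : 1 ≤ m) (X : ℕ → ℕ) {v : ℕ} (hv : v ≤ X 1) :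
    ∑ k ∈ Finset.Icc 1 m, a k * (Function.update X 1 v) k
      ≤ ∑ k ∈ Finset.Icc 1 m, a k * X k := by
  have h := sum_update m a hm X v
  have h2 : a 1 * v ≤ a 1 * X 1 := Nat.mul_le_mul_left _ hv
  omega

lemma sum_le_update (m : ℕ) (a : ℕ → ℕ) (hm : 1 ≤ m) (X : ℕ → ℕ) {v : ℕ} (hv : X 1 ≤ v) :
    ∑ k ∈ Finset.Icc 1 m, a k * X k
      ≤ ∑ k ∈ Finset.Icc 1 m, a k * (Function.update X 1 v) k := by
  have h := sum_update m a hm X v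
  have h2 : a 1 * X 1 ≤ a 1 * v := Nat.mul_le_mul_left _ hv
  omega

lemma master (m : ℕ) (a : ℕ → ℕ) (hm : 1 ≤ m)
    (ct c : (ℕ → ℕ) → (ℕ → ℕ) → ℂ)
    (Sct Sc : Finset ((ℕ → ℕ) × (ℕ → ℕ)))
    (hctsupp : ∀ I J, ct I J ≠ 0 → (I, J) ∈ Sct)
    (hSct : ∀ p ∈ Sct, Supp m p.1 ∧ Supp m p.2)
    (hcsupp : ∀ I J, c I J ≠ 0 → (I, J) ∈ Sc)
    (hSc : ∀ p ∈ Sc, Supp m p.1 ∧ Supp m p.2)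
    (hc0 : ∀ I J : ℕ → ℕ,
      ∑ k ∈ Finset.Icc 1 m, a k * J k ≤ ∑ k ∈ Finset.Icc 1 m, a k * I k → c I J = 0)
    (F : MvPolynomial (Bool × ℕ) ℂ)
    (hFdef : F = (∑ p ∈ Sct, ct p.1 p.2 • monoXY m p.1 p.2) +
      (MvPolynomial.X (false, 1) - MvPolynomial.X (true, 1)) ^ 2 *
        ∑ p ∈ Sc, c p.1 p.2 • monoXY m p.1 p.2)
    (hsym : MvPolynomial.rename (fun p : Bool × ℕ => (!p.1, p.2)) F = F)
    (I J : ℕ → ℕ) (hI : Supp m I) (hJ : Supp m J)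
    (hsum : ∑ k ∈ Finset.Icc 1 m, a k * I k < ∑ k ∈ Finset.Icc 1 m, a k * J k) :
    c I J = ct (Function.update J 1 (J 1 + 2)) I - ct I (Function.update J 1 (J 1 + 2))
      + 2 * (if 1 ≤ I 1 then
          c (Function.update I 1 (I 1 - 1)) (Function.update J 1 (J 1 + 1)) else 0)
      - (if 2 ≤ I 1 then
          c (Function.update I 1 (I 1 - 2)) (Function.update J 1 (J 1 + 2)) else 0) := by
  set B := Function.update J 1 (J 1 + 2) with hB
  have hBsupp : Supp m B := supp_update m hm hJ _
  have hB1 : B 1 = J 1 + 2 := Function.update_self _ _ _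
  have hub2 : Function.update B 1 (B 1 - 2) = J := by
    rw [hB1, hB, Function.update_idem]
    have : J 1 + 2 - 2 = J 1 := by omega
    rw [this, Function.update_eq_self]
  have hub1 : Function.update B 1 (B 1 - 1) = Function.update J 1 (J 1 + 1) := by
    rw [hB1, hB, Function.update_idem]
    congr 1
  have h2B : 2 ≤ B 1 := by omega
  have h1B : 1 ≤ B 1 := by omega
  have hsB : ∑ k ∈ Finset.Icc 1 m, a k * J k ≤ ∑ k ∈ Finset.Icc 1 m, a k * B k :=
    sum_le_update m a hm J (by omega)
  have hsy := coeff_symm m F hsym I B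
  rw [hFdef, coeff_F m hm ct c Sct Sc hctsupp hSct hcsupp hSc I B hI hBsupp,
    coeff_F m hm ct c Sct Sc hctsupp hSct hcsupp hSc B I hBsupp hI] at hsy
  rw [hub1, hub2, if_pos h2B] at hsy
  -- the zero terms on the RHS of hsy
  have hz1 : c J I = 0 := hc0 J I hsum.le
  rw [hz1] at hsy
  have hz2 : (if 2 ≤ I 1 then c B (Function.update I 1 (I 1 - 2)) else 0) = 0 := by
    split_ifs with h
    · exact hc0 _ _ (le_trans (sum_update_le m a hm I (by omega)) (le_trans hsum.le hsB))
    · rfl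
  rw [hz2] at hsy
  have hz3 : (if 1 ≤ B 1 ∧ 1 ≤ I 1 then
      c (Function.update J 1 (J 1 + 1)) (Function.update I 1 (I 1 - 1)) else 0) = 0 := by
    split_ifs with h
    · exact hc0 _ _ (le_trans (sum_update_le m a hm I (by omega))
        (le_trans hsum.le (sum_le_update m a hm J (by omega))))
    · rfl
  rw [hz3] at hsy
  have hiff : (1 ≤ I 1 ∧ 1 ≤ B 1) = (1 ≤ I 1) := by
    simp [h1B]
  simp only [hiff, ite_self] at hsy
  linear_combination hsy

/-- Let `ct = c̃` and `c` be finitely supported functions on `B(A_m) × B(A_m)`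
(with supports contained in the finite sets `Sct` and `Sc` of pairs of elements
of `B(A_m)`), with `c I J = 0` whenever `Σ_k a k * I k ≥ Σ_k a k * J k`, and let
`F(x,y) = Σ_{I,J} c̃(I,J) x^I y^J + (x_1 − y_1)² Σ_{I,J} c(I,J) x^I y^J` be
symmetric, `F(y,x) = F(x,y)` (hypothesis `hsym`, via the variable swap
`(b, k) ↦ (!b, k)`).  Then for all `I, J ∈ B(A_m)` with
`Σ_k a k * I k < Σ_k a k * J k`, the recurrences (i), (ii), (iii) hold, where
`(j_1+2, j_2, …, j_m)` is encoded as `Function.update J 1 (J 1 + 2)`, etc. -/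
theorem coeff_recurrence (m : ℕ) (a : ℕ → ℕ) (hT : Telescopic m a)
    (ct c : (ℕ → ℕ) → (ℕ → ℕ) → ℂ)
    (Sct Sc : Finset ((ℕ → ℕ) × (ℕ → ℕ)))
    (hctsupp : ∀ I J, ct I J ≠ 0 → (I, J) ∈ Sct)
    (hSct : ∀ p ∈ Sct, BAm m a p.1 ∧ BAm m a p.2)
    (hcsupp : ∀ I J, c I J ≠ 0 → (I, J) ∈ Sc)
    (hSc : ∀ p ∈ Sc, BAm m a p.1 ∧ BAm m a p.2)
    (hc0 : ∀ I J : ℕ → ℕ,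
      ∑ k ∈ Finset.Icc 1 m, a k * J k ≤ ∑ k ∈ Finset.Icc 1 m, a k * I k → c I J = 0)
    (F : MvPolynomial (Bool × ℕ) ℂ)
    (hFdef : F = (∑ p ∈ Sct, ct p.1 p.2 • monoXY m p.1 p.2) +
      (MvPolynomial.X (false, 1) - MvPolynomial.X (true, 1)) ^ 2 *
        ∑ p ∈ Sc, c p.1 p.2 • monoXY m p.1 p.2)
    (hsym : MvPolynomial.rename (fun p : Bool × ℕ => (!p.1, p.2)) F = F) :
    ∀ I J : ℕ → ℕ, BAm m a I → BAm m a J →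
      ∑ k ∈ Finset.Icc 1 m, a k * I k < ∑ k ∈ Finset.Icc 1 m, a k * J k →
      (I 1 = 0 → c I J =
        ct (Function.update J 1 (J 1 + 2)) I - ct I (Function.update J 1 (J 1 + 2))) ∧
      (I 1 = 1 → c I J =
        2 * ct (Function.update J 1 (J 1 + 3)) (Function.update I 1 0) -
        2 * ct (Function.update I 1 0) (Function.update J 1 (J 1 + 3)) +
        ct (Function.update J 1 (J 1 + 2)) (Function.update I 1 1) -
        ct (Function.update I 1 1) (Function.update J 1 (J 1 + 2))) ∧
      (2 ≤ I 1 → c I J =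
        2 * c (Function.update I 1 (I 1 - 1)) (Function.update J 1 (J 1 + 1)) -
        c (Function.update I 1 (I 1 - 2)) (Function.update J 1 (J 1 + 2)) +
        ct (Function.update J 1 (J 1 + 2)) I - ct I (Function.update J 1 (J 1 + 2))) := by
  have hm : 1 ≤ m := le_trans one_le_two hT.1
  have hSct' : ∀ p ∈ Sct, Supp m p.1 ∧ Supp m p.2 :=
    fun p hp => ⟨(hSct p hp).1.1, (hSct p hp).2.1⟩
  have hSc' : ∀ p ∈ Sc, Supp m p.1 ∧ Supp m p.2 :=
    fun p hp => ⟨(hSc p hp).1.1, (hSc p hp).2.1⟩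
  intro I J hI hJ hsum
  have hIs : Supp m I := hI.1
  have hJs : Supp m J := hJ.1
  have key := master m a hm ct c Sct Sc hctsupp hSct' hcsupp hSc' hc0 F hFdef hsym
    I J hIs hJs hsum
  refine ⟨?_, ?_, ?_⟩
  · intro h0
    rw [key, if_neg (by omega), if_neg (by omega)]
    ring
  · intro h1
    rw [key, if_pos (by omega), if_neg (by omega)]
    have e0 : I 1 - 1 = 0 := by omega
    rw [e0]
    have hI' : Supp m (Function.update I 1 0) := supp_update m hm hIs 0
    have hJ' : Supp m (Function.update J 1 (J 1 + 1)) := supp_update m hm hJs _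
    have hsum' : ∑ k ∈ Finset.Icc 1 m, a k * (Function.update I 1 0) k
        < ∑ k ∈ Finset.Icc 1 m, a k * (Function.update J 1 (J 1 + 1)) k :=
      lt_of_le_of_lt (sum_update_le m a hm I (by omega))
        (lt_of_lt_of_le hsum (sum_le_update m a hm J (by omega)))
    have key2 := master m a hm ct c Sct Sc hctsupp hSct' hcsupp hSc' hc0 F hFdef hsym
      (Function.update I 1 0) (Function.update J 1 (J 1 + 1)) hI' hJ' hsum'
    rw [if_neg (by simp), if_neg (by simp)] at key2
    have hupd : Function.update (Function.update J 1 (J 1 + 1)) 1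
        (Function.update J 1 (J 1 + 1) 1 + 2) = Function.update J 1 (J 1 + 3) := by
      rw [Function.update_self, Function.update_idem]
    rw [hupd] at key2
    have hII : Function.update I 1 1 = I := by
      funext j
      rcases eq_or_ne j 1 with rfl | h
      · rw [Function.update_self, h1]
      · rw [Function.update_of_ne h]
    rw [key2, hII]
    ring
  · intro h2
    rw [key, if_pos (by omega), if_pos h2]
    ring

end
end

section
/- Let R be a subring of ℂ, let a ≥ 1 be an integer, and let h ∈ ℂ[[t]] be a formal power series with constant term 1 all of whose coefficients lie in R. Let Q = Σ_{i,j ≥ 1} q_{i,j} s^{i−1} t^{j−1} be a formal power series in two variables s, t over ℂ with symmetric coefficients, q_{i,j} = q_{j,i} for all i, j. If every coefficient of the two-variable formal power series (t^a·h(s) − s^a·h(t))² · Q lies in R, then q_{i,j} ∈ R for all i, j ≥ 1. -/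
open Finset

noncomputable section

/-- Let `R` be a subring of `ℂ`, `a ≥ 1`, and `h ∈ ℂ[[t]]` a power series with
constant term `1` all of whose coefficients lie in `R`.  Let
`Q = Σ_{i,j ≥ 1} q_{i,j} s^{i−1} t^{j−1}` be a two-variable formal power series
(in `s = X 0` and `t = X 1`) with symmetric coefficients `q_{i,j} = q_{j,i}`.
Here `Hs` and `Ht` denote `h(s)` and `h(t)` regarded as two-variable power series
(characterized coefficientwise by `hHs`, `hHt`).  If every coefficient of
`(t^a·h(s) − s^a·h(t))² · Q` lies in `R`, then `q_{i,j} ∈ R` for all `i, j ≥ 1`. -/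
theorem q_coeff_mem_of_sq_mul_mem (R : Subring ℂ) (a : ℕ) (ha : 1 ≤ a)
    (h : PowerSeries ℂ) (h0 : PowerSeries.coeff 0 h = 1)
    (hR : ∀ n : ℕ, PowerSeries.coeff n h ∈ R)
    (q : ℕ → ℕ → ℂ) (hqsym : ∀ i j, 1 ≤ i → 1 ≤ j → q i j = q j i)
    (Q : MvPowerSeries (Fin 2) ℂ)
    (hQ : ∀ d : Fin 2 →₀ ℕ, MvPowerSeries.coeff d Q = q (d 0 + 1) (d 1 + 1))
    (Hs : MvPowerSeries (Fin 2) ℂ)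
    (hHs : ∀ d : Fin 2 →₀ ℕ, MvPowerSeries.coeff d Hs =
      if d 1 = 0 then PowerSeries.coeff (d 0) h else 0)
    (Ht : MvPowerSeries (Fin 2) ℂ)
    (hHt : ∀ d : Fin 2 →₀ ℕ, MvPowerSeries.coeff d Ht =
      if d 0 = 0 then PowerSeries.coeff (d 1) h else 0)
    (hE : ∀ d : Fin 2 →₀ ℕ, MvPowerSeries.coeff d
      ((MvPowerSeries.X 1 ^ a * Hs - MvPowerSeries.X 0 ^ a * Ht) ^ 2 * Q) ∈ R) :
    ∀ i j : ℕ, 1 ≤ i → 1 ≤ j → q i j ∈ R := by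
  classical
  set c : ℕ → ℂ := fun n => PowerSeries.coeff n h with hc
  set E : MvPowerSeries (Fin 2) ℂ :=
    MvPowerSeries.X 1 ^ a * Hs - MvPowerSeries.X 0 ^ a * Ht with hEdef
  have fext : ∀ u v : Fin 2 →₀ ℕ, u 0 = v 0 → u 1 = v 1 → u = v := by
    intro u v h0' h1'
    ext x
    fin_cases x
    · exact h0'
    · exact h1'
  -- coefficient of E
  have cE : ∀ d : Fin 2 →₀ ℕ, MvPowerSeries.coeff d E =
      (if d 1 = a then c (d 0) else 0) - (if d 0 = a then c (d 1) else 0) := by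
    intro d
    rw [hEdef, map_sub, MvPowerSeries.X_pow_eq, MvPowerSeries.X_pow_eq,
      MvPowerSeries.coeff_monomial_mul, MvPowerSeries.coeff_monomial_mul]
    congr 1
    · by_cases hle : Finsupp.single (1 : Fin 2) a ≤ d
      · rw [if_pos hle, one_mul, hHs]
        have ha1 : a ≤ d 1 := by
          have := hle 1
          simpa using this
        have h1 : (d - Finsupp.single (1 : Fin 2) a) 1 = d 1 - a := by
          simp [Finsupp.tsub_apply]
        have h0' : (d - Finsupp.single (1 : Fin 2) a) 0 = d 0 := by
          simp [Finsupp.tsub_apply, Finsupp.single_apply]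
        rw [h1, h0']
        by_cases hda : d 1 = a
        · rw [if_pos hda, if_pos (by omega)]
        · rw [if_neg hda, if_neg (by omega)]
      · rw [if_neg hle]
        have hda : d 1 ≠ a := by
          intro hda
          exact hle (by
            intro x
            fin_cases x <;> simp [Finsupp.single_apply, hda])
        rw [if_neg hda]
    · by_cases hle : Finsupp.single (0 : Fin 2) a ≤ d
      · rw [if_pos hle, one_mul, hHt]
        have ha1 : a ≤ d 0 := by
          have := hle 0
          simpa using this
        have h1 : (d - Finsupp.single (0 : Fin 2) a) 0 = d 0 - a := by
          simp [Finsupp.tsub_apply]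
        have h0' : (d - Finsupp.single (0 : Fin 2) a) 1 = d 1 := by
          simp [Finsupp.tsub_apply, Finsupp.single_apply]
        rw [h1, h0']
        by_cases hda : d 0 = a
        · rw [if_pos hda, if_pos (by omega)]
        · rw [if_neg hda, if_neg (by omega)]
      · rw [if_neg hle]
        have hda : d 0 ≠ a := by
          intro hda
          exact hle (by
            intro x
            fin_cases x <;> simp [Finsupp.single_apply, hda])
        rw [if_neg hda]
  have cER : ∀ d : Fin 2 →₀ ℕ, MvPowerSeries.coeff d E ∈ R := by
    intro d
    rw [cE]
    refine sub_mem ?_ ?_ <;> (split_ifs <;> first | exact hR _ | exact zero_mem _)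
  have hpow : E ^ 2 = E * E := by ring
  -- all coefficients of E^2 are in R
  have eR : ∀ d : Fin 2 →₀ ℕ, MvPowerSeries.coeff d (E ^ 2) ∈ R := by
    intro d
    rw [hpow, MvPowerSeries.coeff_mul]
    exact sum_mem fun p _ => mul_mem (cER p.1) (cER p.2)
  -- nonzero coefficient of E at (0, l) forces l = a
  have cE0 : ∀ u : Fin 2 →₀ ℕ, u 0 = 0 → MvPowerSeries.coeff u E ≠ 0 → u 1 = a := by
    intro u hu0 hne
    rw [cE] at hne
    have h2 : ¬ (u 0 = a) := by omega
    rw [if_neg h2, sub_zero] at hne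
    by_contra hua
    rw [if_neg hua] at hne
    exact hne rfl
  -- coefficient of E^2 at (0, 2a) is 1
  have eB : MvPowerSeries.coeff (Finsupp.single 1 (2 * a)) (E ^ 2) = 1 := by
    rw [hpow, MvPowerSeries.coeff_mul]
    rw [Finset.sum_eq_single_of_mem (Finsupp.single (1 : Fin 2) a, Finsupp.single (1 : Fin 2) a)]
    · rw [cE]
      have e1 : (Finsupp.single (1 : Fin 2) a) 1 = a := by simp
      have e0 : (Finsupp.single (1 : Fin 2) a) 0 = 0 := by
        simp [Finsupp.single_apply]
      rw [e1, e0, if_pos rfl, if_neg (by omega), sub_zero]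
      simp [hc, h0]
    · rw [Finset.HasAntidiagonal.mem_antidiagonal, ← Finsupp.single_add, two_mul]
    · rintro ⟨u, v⟩ hmem hne
      rw [Finset.HasAntidiagonal.mem_antidiagonal] at hmem
      by_contra hterm
      have hu := left_ne_zero_of_mul hterm
      have hv := right_ne_zero_of_mul hterm
      have hadd0 : u 0 + v 0 = 0 := by
        have := congrArg (fun f : Fin 2 →₀ ℕ => f 0) hmem
        simpa [Finsupp.single_apply] using this
      have hu0 : u 0 = 0 := by omega
      have hv0 : v 0 = 0 := by omega
      have hu1 := cE0 u hu0 hu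
      have hv1 := cE0 v hv0 hv
      apply hne
      have : u = Finsupp.single (1 : Fin 2) a := by
        apply fext <;> simp [hu0, hu1, Finsupp.single_apply]
      have hv' : v = Finsupp.single (1 : Fin 2) a := by
        apply fext <;> simp [hv0, hv1, Finsupp.single_apply]
      rw [this, hv']
  -- coefficient of E^2 at (0, l) with l ≠ 2a vanishes
  have eC : ∀ d : Fin 2 →₀ ℕ, d 0 = 0 → d 1 ≠ 2 * a →
      MvPowerSeries.coeff d (E ^ 2) = 0 := by
    intro d hd0 hd1
    rw [hpow, MvPowerSeries.coeff_mul]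
    apply Finset.sum_eq_zero
    rintro ⟨u, v⟩ hmem
    rw [Finset.HasAntidiagonal.mem_antidiagonal] at hmem
    by_contra hterm
    have hu := left_ne_zero_of_mul hterm
    have hv := right_ne_zero_of_mul hterm
    have hadd0 : u 0 + v 0 = d 0 := by
      have := congrArg (fun f : Fin 2 →₀ ℕ => f 0) hmem
      simpa using this
    have hadd1 : u 1 + v 1 = d 1 := by
      have := congrArg (fun f : Fin 2 →₀ ℕ => f 1) hmem
      simpa using this
    have hu1 := cE0 u (by omega) hu
    have hv1 := cE0 v (by omega) hv
    omega
  -- main induction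
  intro i
  induction i using Nat.strong_induction_on with
  | _ i IH =>
  intro j hi hj
  set D : Fin 2 →₀ ℕ := Finsupp.single 0 (i - 1) + Finsupp.single 1 (j - 1 + 2 * a) with hD
  have hD0 : D 0 = i - 1 := by simp [hD, Finsupp.single_apply]
  have hD1 : D 1 = j - 1 + 2 * a := by simp [hD, Finsupp.single_apply]
  have hEQ := hE D
  rw [MvPowerSeries.coeff_mul] at hEQ
  set P : (Fin 2 →₀ ℕ) × (Fin 2 →₀ ℕ) :=
    (Finsupp.single 1 (2 * a), Finsupp.single 0 (i - 1) + Finsupp.single 1 (j - 1)) with hP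
  have hPmem : P ∈ Finset.HasAntidiagonal.antidiagonal D := by
    rw [Finset.HasAntidiagonal.mem_antidiagonal]
    apply fext <;> simp [hP, hD, Finsupp.single_apply] <;> omega
  rw [← Finset.add_sum_erase _ _ hPmem] at hEQ
  have hPval : MvPowerSeries.coeff P.1 (E ^ 2) * MvPowerSeries.coeff P.2 Q = q i j := by
    rw [hP]
    dsimp only
    rw [eB, one_mul, hQ]
    have e0 : (Finsupp.single (0 : Fin 2) (i - 1) + Finsupp.single (1 : Fin 2) (j - 1)) 0
        = i - 1 := by simp [Finsupp.single_apply]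
    have e1 : (Finsupp.single (0 : Fin 2) (i - 1) + Finsupp.single (1 : Fin 2) (j - 1)) 1
        = j - 1 := by simp [Finsupp.single_apply]
    rw [e0, e1]
    congr 1 <;> omega
  rw [hPval] at hEQ
  have hrest : ∑ x ∈ (Finset.HasAntidiagonal.antidiagonal D).erase P,
      MvPowerSeries.coeff x.1 (E ^ 2) * MvPowerSeries.coeff x.2 Q ∈ R := by
    apply sum_mem
    rintro ⟨u, v⟩ hx
    rw [Finset.mem_erase, Finset.HasAntidiagonal.mem_antidiagonal] at hx
    obtain ⟨hne, hmem⟩ := hx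
    have hadd0 : u 0 + v 0 = i - 1 := by
      have := congrArg (fun f : Fin 2 →₀ ℕ => f 0) hmem
      simpa [hD0] using this
    have hadd1 : u 1 + v 1 = j - 1 + 2 * a := by
      have := congrArg (fun f : Fin 2 →₀ ℕ => f 1) hmem
      simpa [hD1] using this
    by_cases hu0 : u 0 = 0
    · -- then the coefficient of E^2 must vanish, else (u,v) = P
      by_cases hcz : MvPowerSeries.coeff u (E ^ 2) = 0
      · rw [hcz, zero_mul]; exact zero_mem _
      · exfalso
        have hu1 : u 1 = 2 * a := by
          by_contra hu1
          exact hcz (eC u hu0 hu1)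
        apply hne
        have hu' : u = Finsupp.single (1 : Fin 2) (2 * a) := by
          apply fext <;> simp [hu0, hu1, Finsupp.single_apply]
        have hv' : v = Finsupp.single (0 : Fin 2) (i - 1) + Finsupp.single (1 : Fin 2) (j - 1) := by
          apply fext <;> simp [Finsupp.single_apply] <;> omega
        rw [hP, hu', hv']
    · -- u 0 ≥ 1, so v 0 + 1 < i : use induction hypothesis
      rw [hQ]
      exact mul_mem (eR u) (IH (v 0 + 1) (by omega) (v 1 + 1) (by omega) (by omega))
  have := sub_mem hEQ hrest
  simpa using this

end
end
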